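/- Let G = (V, A) be a loopless digraph with |V| ≥ 2. Let G' be the undirected graph with vertex set V × {in, mid, out}, with edges {(v,in),(v,mid)} and {(v,mid),(v,out)} for every v ∈ V, and an edge {(u,out),(w,in)} for every arc (u,w) ∈ A. Then: (i) every Hamiltonian cycle of G' contains all the edges {(v,in),(v,mid)} and {(v,mid),(v,out)}, v ∈ V; and (ii) the map sending a Hamiltonian cycle C' of G' to {(u,w) ∈ A : {(u,out),(w,in)} ∈ C'} is a bijection from the Hamiltonian cycles of G' to the Hamiltonian cycles of G. In particular, G' has a Hamiltonian cycle if and only if G does. -/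

import Mathlib

/-- `C` is a Hamiltonian cycle in the digraph with arc set `A`: the set of arcs of a
directed cycle visiting every vertex exactly once. -/
def IsDHamCycle {V : Type*} (A : Set (V × V)) (C : Set (V × V)) : Prop :=
  ∃ l : List V, l ≠ [] ∧ l.Nodup ∧ (∀ v : V, v ∈ l) ∧ C ⊆ A ∧
    C = {p | p ∈ l.zip (l.rotate 1)}

/-- `C` is a Hamiltonian cycle in the undirected graph with edge set `E`: the set of
edges of a cycle visiting every vertex exactly once. -/
def IsUHamCycle {W : Type*} (E : Set (Sym2 W)) (C : Set (Sym2 W)) : Prop :=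
  ∃ l : List W, l ≠ [] ∧ l.Nodup ∧ (∀ v : W, v ∈ l) ∧ C ⊆ E ∧
    C = {e | e ∈ (l.zip (l.rotate 1)).map fun p => s(p.1, p.2)}

/-- The edge set of the undirected graph `G'` on `V × {in, mid, out}` (tags `0, 1, 2`):
spine edges `{(v,in),(v,mid)}` and `{(v,mid),(v,out)}` for every `v`, and a cross edge
`{(u,out),(w,in)}` for every arc `(u,w) ∈ A`. -/
def tEdges {V : Type*} (A : Set (V × V)) : Set (Sym2 (V × Fin 3)) :=
  {e | (∃ v : V, e = s((v, (0 : Fin 3)), (v, 1)) ∨ e = s((v, (1 : Fin 3)), (v, 2))) ∨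
       (∃ u w : V, (u, w) ∈ A ∧ e = s((u, (2 : Fin 3)), (w, 0)))}

section Aux

open List


lemma mem_zip_rotate {α : Type*} {l : List α} {p : α × α} :
    p ∈ l.zip (l.rotate 1) ↔ ∃ i, ∃ h : i < l.length,
      p = (l[i], l[(i+1) % l.length]'(Nat.mod_lt _ (Nat.lt_of_le_of_lt (Nat.zero_le i) h))) := by
  rw [List.mem_iff_getElem]
  constructor
  · rintro ⟨i, hi, hp⟩
    have hi' : i < l.length := by simpa using hi
    refine ⟨i, hi', ?_⟩
    rw [← hp, List.getElem_zip, List.getElem_rotate]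
  · rintro ⟨i, hi, hp⟩
    have hi' : i < (l.zip (l.rotate 1)).length := by simpa using hi
    refine ⟨i, hi', ?_⟩
    rw [List.getElem_zip, List.getElem_rotate, hp]

lemma pairs_eq_graph {α : Type*} [DecidableEq α] {l : List α} (hn : l.Nodup) :
    {p : α × α | p ∈ l.zip (l.rotate 1)} = {p | p.1 ∈ l ∧ p.2 = l.formPerm p.1} := by
  ext ⟨a, b⟩
  simp only [Set.mem_setOf_eq, mem_zip_rotate, Prod.mk.injEq]
  constructor
  · rintro ⟨i, hi, rfl, rfl⟩
    exact ⟨List.getElem_mem _, (List.formPerm_apply_getElem l hn i hi).symm⟩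
  · rintro ⟨ha, rfl⟩
    obtain ⟨i, hi, rfl⟩ := List.mem_iff_getElem.1 ha
    exact ⟨i, hi, rfl, List.formPerm_apply_getElem l hn i hi⟩

variable {V : Type*} {A : Set (V × V)}

lemma nbr1 {v : V} {y : V × Fin 3} (h : s(((v, 1) : V × Fin 3), y) ∈ tEdges A) :
    y = (v, 0) ∨ y = (v, 2) := by
  simp only [tEdges, Set.mem_setOf_eq, Sym2.eq_iff, Prod.mk.injEq] at h
  rcases h with (⟨u, (⟨⟨h1, h2⟩, h3⟩ | ⟨⟨h1, h2⟩, h3⟩) | (⟨⟨h1, h2⟩, h3⟩ | ⟨⟨h1, h2⟩, h3⟩)⟩ |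
    ⟨u, w, hA, (⟨⟨h1, h2⟩, h3⟩ | ⟨⟨h1, h2⟩, h3⟩)⟩)
  · exact absurd h2 (by decide)
  · subst h1; exact Or.inl h3
  · subst h1; exact Or.inr h3
  · exact absurd h2 (by decide)
  · exact absurd h2 (by decide)
  · exact absurd h2 (by decide)

lemma nbr0 {v : V} {y : V × Fin 3} (h : s(((v, 0) : V × Fin 3), y) ∈ tEdges A) :
    y = (v, 1) ∨ ∃ u, (u, v) ∈ A ∧ y = (u, 2) := by
  simp only [tEdges, Set.mem_setOf_eq, Sym2.eq_iff, Prod.mk.injEq] at h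
  rcases h with (⟨u, (⟨⟨h1, h2⟩, h3⟩ | ⟨⟨h1, h2⟩, h3⟩) | (⟨⟨h1, h2⟩, h3⟩ | ⟨⟨h1, h2⟩, h3⟩)⟩ |
    ⟨u, w, hA, (⟨⟨h1, h2⟩, h3⟩ | ⟨⟨h1, h2⟩, h3⟩)⟩)
  · subst h1; exact Or.inl h3
  · exact absurd h2 (by decide)
  · exact absurd h2 (by decide)
  · exact absurd h2 (by decide)
  · exact absurd h2 (by decide)
  · subst h1; exact Or.inr ⟨u, hA, h3⟩

lemma nbr2 {v : V} {y : V × Fin 3} (h : s(((v, 2) : V × Fin 3), y) ∈ tEdges A) :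
    y = (v, 1) ∨ ∃ w, (v, w) ∈ A ∧ y = (w, 0) := by
  simp only [tEdges, Set.mem_setOf_eq, Sym2.eq_iff, Prod.mk.injEq] at h
  rcases h with (⟨u, (⟨⟨h1, h2⟩, h3⟩ | ⟨⟨h1, h2⟩, h3⟩) | (⟨⟨h1, h2⟩, h3⟩ | ⟨⟨h1, h2⟩, h3⟩)⟩ |
    ⟨u, w, hA, (⟨⟨h1, h2⟩, h3⟩ | ⟨⟨h1, h2⟩, h3⟩)⟩)
  · exact absurd h2 (by decide)
  · exact absurd h2 (by decide)
  · exact absurd h2 (by decide)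
  · subst h1; exact Or.inl h3
  · subst h1; exact Or.inr ⟨w, hA, h3⟩
  · exact absurd h2 (by decide)

lemma inner {V : Type*} [Fintype V] {A : Set (V × V)}
    {C' : Set (Sym2 (V × Fin 3))} (hE : C' ⊆ tEdges A)
    (π : Equiv.Perm (V × Fin 3))
    (hC : C' = {e | ∃ x, e = s(x, π x)})
    (hne2 : ∀ x, π (π x) ≠ x)
    (htr : ∀ x y : V × Fin 3, ∃ k : ℕ, (π ^ k) x = y)
    (v₀ : V) (hor : π (v₀, 1) = (v₀, 2)) :
    ∃ τ : Equiv.Perm V, (∀ v, (v, τ v) ∈ A) ∧ (∀ u v : V, ∃ k : ℕ, (τ ^ k) u = v) ∧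
      C' = {e | (∃ v : V, e = s((v, (0 : Fin 3)), (v, 1)) ∨ e = s((v, (1 : Fin 3)), (v, 2))) ∨
            ∃ v : V, e = s((v, (2 : Fin 3)), (τ v, 0))} ∧
      {p : V × V | p ∈ A ∧ s((p.1, (2 : Fin 3)), (p.2, 0)) ∈ C'} = {p : V × V | p.2 = τ p.1} := by
  have hA1 : ∀ x : V × Fin 3, s(x, π x) ∈ tEdges A := by
    intro x; exact hE (by rw [hC]; exact ⟨x, rfl⟩)
  have hA1' : ∀ x : V × Fin 3, s(x, π⁻¹ x) ∈ tEdges A := by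
    intro x
    have := hA1 (π⁻¹ x)
    rw [Equiv.Perm.coe_inv, Equiv.apply_symm_apply, Sym2.eq_swap] at this
    exact this
  have hP : ∀ v : V, π (v, 1) = (v, 2) → ∃ w, (v, w) ∈ A ∧ π (v, 2) = (w, 0) ∧
      π (w, 0) = (w, 1) ∧ π (w, 1) = (w, 2) := by
    intro v hv
    rcases nbr2 (hA1 (v, 2)) with h | ⟨w, hw, hw2⟩
    · exact absurd (by rw [hv, h]) (hne2 (v, 1))
    · refine ⟨w, hw, hw2, ?_⟩
      have n1 := nbr1 (hA1 (w, 1))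
      have n2 := nbr1 (hA1' (w, 1))
      rcases n1 with h10 | h12
      · exfalso
        have : ((w, 1) : V × Fin 3) = (v, 2) := π.injective (by rw [h10, hw2])
        simpa using congrArg Prod.snd this
      · refine ⟨?_, h12⟩
        rcases n2 with h | h
        · have h' := congrArg π h
          rw [Equiv.Perm.coe_inv, Equiv.apply_symm_apply] at h'
          exact h'.symm
        · exfalso
          have h' := congrArg π h
          rw [Equiv.Perm.coe_inv, Equiv.apply_symm_apply] at h'
          exact hne2 (w, 1) (by rw [h12, ← h'])
  have hOk : ∀ k : ℕ, ∃ t : V, (π ^ (3 * k)) (v₀, 1) = (t, 1) ∧ π (t, 1) = (t, 2) := by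
    intro k
    induction k with
    | zero => exact ⟨v₀, by simp, hor⟩
    | succ k ih =>
      obtain ⟨t, ht, ht2⟩ := ih
      obtain ⟨w, hw, h2, h0, h1⟩ := hP t ht2
      refine ⟨w, ?_, h1⟩
      have h3 : 3 * (k + 1) = 3 * k + 1 + 1 + 1 := by ring
      rw [h3, pow_succ', pow_succ', pow_succ']
      simp only [Equiv.Perm.mul_apply]
      rw [ht, ht2, h2, h0]
  have hmid : ∀ v : V, π (v, 1) = (v, 2) := by
    intro v
    obtain ⟨j, hj⟩ := htr (v₀, 1) (v, 1)
    obtain ⟨t, ht, ht2⟩ := hOk (j / 3)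
    obtain ⟨w, hw, h2, h0, h1⟩ := hP t ht2
    have hj3 : j = j % 3 + 3 * (j / 3) := by omega
    have hr : j % 3 = 0 ∨ j % 3 = 1 ∨ j % 3 = 2 := by omega
    rw [hj3, pow_add, Equiv.Perm.mul_apply, ht] at hj
    rcases hr with hr | hr | hr <;> rw [hr] at hj
    · rw [pow_zero] at hj
      simp only [Equiv.Perm.coe_one, id_eq, Prod.mk.injEq] at hj
      rcases hj with ⟨rfl, -⟩
      exact ht2
    · rw [pow_one, ht2] at hj
      simpa using congrArg Prod.snd hj
    · rw [pow_two, Equiv.Perm.mul_apply, ht2, h2] at hj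
      simpa using congrArg Prod.snd hj
  set τ₀ : V → V := fun v => (π (v, 2)).1 with hτ₀
  have hτ : ∀ v : V, π (v, 2) = (τ₀ v, 0) ∧ (v, τ₀ v) ∈ A ∧ π (τ₀ v, 0) = (τ₀ v, 1) := by
    intro v
    obtain ⟨w, hw, h2, h0, h1⟩ := hP v (hmid v)
    have hwv : τ₀ v = w := by rw [hτ₀]; simp [h2]
    rw [hwv]
    exact ⟨h2, hw, h0⟩
  have hinj : Function.Injective τ₀ := by
    intro u v huv
    have h1 := (hτ u).1
    have h2 := (hτ v).1
    rw [huv, ← h2] at h1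
    have := π.injective h1
    simpa [Prod.ext_iff] using this
  have hbij : Function.Bijective τ₀ := Finite.injective_iff_bijective.mp hinj
  set τ : Equiv.Perm V := Equiv.ofBijective τ₀ hbij with hτdef
  have hτv : ∀ v, τ v = τ₀ v := fun _ => rfl
  have h0all : ∀ w : V, π (w, 0) = (w, 1) := by
    intro w
    obtain ⟨v, rfl⟩ := hbij.surjective w
    exact (hτ v).2.2
  have hT : ∀ (v : V) (k : ℕ), (π ^ (3 * k)) (v, 1) = ((τ ^ k) v, 1) := by
    intro v k
    induction k with
    | zero => simp
    | succ k ih =>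
      have h3 : 3 * (k + 1) = 3 * k + 1 + 1 + 1 := by ring
      rw [h3, pow_succ', pow_succ', pow_succ']
      simp only [Equiv.Perm.mul_apply]
      rw [ih, hmid, (hτ ((τ ^ k) v)).1, (hτ ((τ ^ k) v)).2.2]
      rw [pow_succ', Equiv.Perm.mul_apply, hτv]
  have htrτ : ∀ u v : V, ∃ k : ℕ, (τ ^ k) u = v := by
    intro u v
    obtain ⟨j, hj⟩ := htr (u, 1) (v, 1)
    refine ⟨j / 3, ?_⟩
    have hj3 : j = j % 3 + 3 * (j / 3) := by omega
    have hr : j % 3 = 0 ∨ j % 3 = 1 ∨ j % 3 = 2 := by omega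
    rw [hj3, pow_add, Equiv.Perm.mul_apply, hT u (j / 3)] at hj
    rcases hr with hr | hr | hr <;> rw [hr] at hj
    · rw [pow_zero] at hj
      simp only [Equiv.Perm.coe_one, id_eq, Prod.mk.injEq] at hj
      exact hj.1
    · rw [pow_one, hmid] at hj
      simpa using congrArg Prod.snd hj
    · rw [pow_two, Equiv.Perm.mul_apply, hmid, (hτ ((τ ^ (j / 3)) u)).1] at hj
      simpa using congrArg Prod.snd hj
  have tri : ∀ y : V × Fin 3, y = (y.1, 0) ∨ y = (y.1, 1) ∨ y = (y.1, 2) := by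
    rintro ⟨x, i⟩
    fin_cases i <;> simp
  have hC'f : C' = {e | (∃ v : V, e = s((v, (0 : Fin 3)), (v, 1)) ∨
      e = s((v, (1 : Fin 3)), (v, 2))) ∨ ∃ v : V, e = s((v, (2 : Fin 3)), (τ v, 0))} := by
    rw [hC]
    ext e
    simp only [Set.mem_setOf_eq]
    constructor
    · rintro ⟨y, rfl⟩
      rcases tri y with h | h | h <;> rw [h]
      · exact Or.inl ⟨y.1, Or.inl (by rw [h0all])⟩
      · exact Or.inl ⟨y.1, Or.inr (by rw [hmid])⟩
      · exact Or.inr ⟨y.1, by rw [(hτ y.1).1, hτv]⟩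
    · rintro (⟨v, rfl | rfl⟩ | ⟨v, rfl⟩)
      · exact ⟨(v, 0), by rw [h0all]⟩
      · exact ⟨(v, 1), by rw [hmid]⟩
      · exact ⟨(v, 2), by rw [(hτ v).1, hτv]⟩
  refine ⟨τ, fun v => by rw [hτv]; exact (hτ v).2.1, htrτ, hC'f, ?_⟩
  ext ⟨u, w⟩
  simp only [Set.mem_setOf_eq]
  constructor
  · rintro ⟨hA', hm⟩
    rw [hC'f] at hm
    simp only [Set.mem_setOf_eq, Sym2.eq_iff, Prod.mk.injEq] at hm
    rcases hm with ⟨v, (⟨⟨e1, e2⟩, e3, e4⟩ | ⟨⟨e1, e2⟩, e3, e4⟩) |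
      (⟨⟨e1, e2⟩, e3, e4⟩ | ⟨⟨e1, e2⟩, e3, e4⟩)⟩ |
      ⟨v, (⟨⟨e1, e2⟩, e3, e4⟩ | ⟨⟨e1, e2⟩, e3, e4⟩)⟩
    · exact absurd e2 (by decide)
    · exact absurd e2 (by decide)
    · exact absurd e2 (by decide)
    · exact absurd e4 (by decide)
    · exact e3.trans (by rw [e1])
    · exact absurd e2 (by decide)
  · intro h
    refine ⟨?_, ?_⟩
    · rw [h, hτv]; exact (hτ u).2.1
    · rw [hC'f]
      exact Or.inr ⟨u, by rw [h]⟩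

lemma perm_to_dham {V : Type*} [Fintype V] [DecidableEq V] [Nonempty V]
    {A : Set (V × V)} (τ : Equiv.Perm V) (hA : ∀ v, (v, τ v) ∈ A)
    (hloop : ∀ v : V, (v, v) ∉ A)
    (htr : ∀ u v : V, ∃ k : ℕ, (τ ^ k) u = v) :
    IsDHamCycle A {p : V × V | p.2 = τ p.1} := by
  obtain ⟨u₀⟩ := ‹Nonempty V›
  have hne : ∀ v, τ v ≠ v := by
    intro v h
    have := hA v
    rw [h] at this
    exact hloop v this
  have hcycle : τ.IsCycle := by
    refine ⟨u₀, hne u₀, fun y _ => ?_⟩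
    obtain ⟨k, hk⟩ := htr u₀ y
    exact ⟨(k : ℤ), by rw [zpow_natCast]; exact hk⟩
  set l := τ.toList u₀ with hl
  have hnodup := Equiv.Perm.nodup_toList τ u₀
  have hu₀s : u₀ ∈ τ.support := Equiv.Perm.mem_support.2 (hne u₀)
  have hcov : ∀ v, v ∈ l := by
    intro v
    rw [hl, Equiv.Perm.mem_toList_iff]
    obtain ⟨k, hk⟩ := htr u₀ v
    exact ⟨⟨(k : ℤ), by rw [zpow_natCast]; exact hk⟩, hu₀s⟩
  have hform : l.formPerm = τ := by
    rw [hl, Equiv.Perm.formPerm_toList]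
    exact hcycle.cycleOf_eq (hne u₀)
  refine ⟨l, fun h => by simpa [h] using hcov u₀, hnodup, hcov, ?_, ?_⟩
  · rintro ⟨u, w⟩ hp
    simp only [Set.mem_setOf_eq] at hp
    rw [hp]
    exact hA u
  · rw [pairs_eq_graph hnodup, hform]
    ext p
    simp [hcov, show ∀ v, v ∈ τ.toList u₀ from hcov]

lemma main {V : Type*} [Fintype V] [DecidableEq V] (hV : 2 ≤ Fintype.card V)
    {A : Set (V × V)} {C' : Set (Sym2 (V × Fin 3))} (h : IsUHamCycle (tEdges A) C') :
    ∃ τ : Equiv.Perm V, (∀ v, (v, τ v) ∈ A) ∧ (∀ u v : V, ∃ k : ℕ, (τ ^ k) u = v) ∧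
      C' = {e | (∃ v : V, e = s((v, (0 : Fin 3)), (v, 1)) ∨ e = s((v, (1 : Fin 3)), (v, 2))) ∨
            ∃ v : V, e = s((v, (2 : Fin 3)), (τ v, 0))} ∧
      {p : V × V | p ∈ A ∧ s((p.1, (2 : Fin 3)), (p.2, 0)) ∈ C'} = {p : V × V | p.2 = τ p.1} := by
  obtain ⟨l, hnil, hnodup, hcov, hE, hCeq⟩ := h
  have hlen : l.length = 3 * Fintype.card V := by
    have h1 : l.toFinset = Finset.univ := Finset.eq_univ_iff_forall.2 (by simp [hcov])
    have h2 := List.toFinset_card_of_nodup hnodup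
    rw [h1] at h2
    simp only [Finset.card_univ, Fintype.card_prod, Fintype.card_fin] at h2
    omega
  have hlen3 : 3 ≤ l.length := by omega
  set σ := l.formPerm with hσ
  have hpg : ∀ p : (V × Fin 3) × (V × Fin 3),
      p ∈ l.zip (l.rotate 1) ↔ p.1 ∈ l ∧ p.2 = σ p.1 :=
    fun p => Set.ext_iff.mp (pairs_eq_graph hnodup) p
  have hC : C' = {e | ∃ x, e = s(x, σ x)} := by
    rw [hCeq]
    ext e
    simp only [Set.mem_setOf_eq, List.mem_map]
    constructor
    · rintro ⟨p, hp, rfl⟩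
      obtain ⟨-, h2⟩ := (hpg p).1 hp
      exact ⟨p.1, by rw [h2]⟩
    · rintro ⟨x, rfl⟩
      exact ⟨(x, σ x), (hpg (x, σ x)).2 ⟨hcov x, rfl⟩, rfl⟩
  have hpow : ∀ (k i : ℕ) (hi : i < l.length),
      (σ ^ k) l[i] = l[(i + k) % l.length]'(Nat.mod_lt _ (by omega)) :=
    fun k i hi => List.formPerm_pow_apply_getElem l hnodup k i hi
  have hne2 : ∀ x, σ (σ x) ≠ x := by
    intro x hx
    obtain ⟨i, hi, rfl⟩ := List.mem_iff_getElem.1 (hcov x)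
    have h2 : (σ ^ 2) l[i] = l[i] := by
      rw [pow_two, Equiv.Perm.mul_apply]; exact hx
    rw [hpow 2 i hi] at h2
    have := (hnodup.getElem_inj_iff).1 h2
    rcases Nat.lt_or_ge (i + 2) l.length with hc | hc
    · rw [Nat.mod_eq_of_lt hc] at this
      omega
    · rw [Nat.mod_eq_sub_mod hc, Nat.mod_eq_of_lt (by omega)] at this
      omega
  have htr : ∀ x y : V × Fin 3, ∃ k : ℕ, (σ ^ k) x = y := by
    intro x y
    obtain ⟨i, hi, rfl⟩ := List.mem_iff_getElem.1 (hcov x)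
    obtain ⟨j, hj, rfl⟩ := List.mem_iff_getElem.1 (hcov y)
    refine ⟨l.length - i + j, ?_⟩
    rw [hpow _ i hi]
    have hidx : (i + (l.length - i + j)) % l.length = j := by
      have : i + (l.length - i + j) = l.length + j := by omega
      rw [this, Nat.add_mod_left, Nat.mod_eq_of_lt hj]
    simp only [hidx]
  have hA1 : ∀ x : V × Fin 3, s(x, σ x) ∈ tEdges A := by
    intro x; exact hE (by rw [hC]; exact ⟨x, rfl⟩)
  obtain ⟨v₀⟩ : Nonempty V := Fintype.card_pos_iff.1 (by omega)
  rcases nbr1 (hA1 (v₀, 1)) with h0 | h2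
  · -- σ (v₀,1) = (v₀,0) : use σ⁻¹
    have hA1' : ∀ x : V × Fin 3, s(x, σ⁻¹ x) ∈ tEdges A := by
      intro x
      have := hA1 (σ⁻¹ x)
      rw [Equiv.Perm.coe_inv, Equiv.apply_symm_apply, Sym2.eq_swap] at this
      exact this
    have hor : σ⁻¹ (v₀, 1) = (v₀, 2) := by
      rcases nbr1 (hA1' (v₀, 1)) with h | h
      · exfalso
        have h1 : σ (v₀, 0) = (v₀, 1) := by
          have := congrArg σ h
          rw [Equiv.Perm.coe_inv, Equiv.apply_symm_apply] at this
          exact this.symm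
        exact hne2 (v₀, 0) (by rw [h1, h0])
      · exact h
    have hCinv : C' = {e | ∃ x, e = s(x, σ⁻¹ x)} := by
      rw [hC]
      ext e
      simp only [Set.mem_setOf_eq]
      constructor
      · rintro ⟨x, rfl⟩
        exact ⟨σ x, by rw [Equiv.Perm.coe_inv, Equiv.symm_apply_apply, Sym2.eq_swap]⟩
      · rintro ⟨x, rfl⟩
        exact ⟨σ⁻¹ x, by rw [Equiv.Perm.coe_inv, Equiv.apply_symm_apply, Sym2.eq_swap]⟩
    have hne2' : ∀ x, σ⁻¹ (σ⁻¹ x) ≠ x := by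
      intro x hx
      have h1 : σ⁻¹ x = σ x := by
        have := congrArg σ hx
        rwa [Equiv.Perm.coe_inv, Equiv.apply_symm_apply] at this
      exact hne2 x (by rw [← h1, Equiv.Perm.coe_inv, Equiv.apply_symm_apply])
    have htr' : ∀ x y : V × Fin 3, ∃ k : ℕ, ((σ⁻¹) ^ k) x = y := by
      intro x y
      obtain ⟨k, hk⟩ := htr y x
      refine ⟨k, ?_⟩
      rw [inv_pow]
      exact Equiv.Perm.inv_eq_iff_eq.mpr hk.symm
    exact inner hE σ⁻¹ hCinv hne2' htr' v₀ hor
  · exact inner hE σ hC hne2 htr v₀ h2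

open Fin.NatCast in
lemma sur {V : Type*} {A : Set (V × V)} {C : Set (V × V)} (h : IsDHamCycle A C) :
    ∃ C', IsUHamCycle (tEdges A) C' ∧
      {p : V × V | p ∈ A ∧ s((p.1, (2 : Fin 3)), (p.2, 0)) ∈ C'} = C := by
  obtain ⟨l, hnil, hnodup, hcov, hCA, hCeq⟩ := h
  have hn1 : 1 ≤ l.length := List.length_pos_iff.2 hnil
  set n := l.length with hn
  set l' : List (V × Fin 3) :=
    (List.range (3 * n)).map
      (fun j => (l.getD (j / 3) (l.head hnil), ((j % 3 : ℕ) : Fin 3))) with hl'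
  have hlen' : l'.length = 3 * n := by simp [hl']
  have hget : ∀ (j : ℕ) (hj : j < l'.length),
      l'[j] = (l[j / 3]'(by rw [hlen'] at hj; omega), ((j % 3 : ℕ) : Fin 3)) := by
    intro j hj
    have hj' : j < 3 * n := by rwa [hlen'] at hj
    simp only [hl', List.getElem_map, List.getElem_range]
    rw [List.getD_eq_getElem _ _ (by omega)]
  have hc0 : (((0 : ℕ) : Fin 3)) = 0 := by decide
  have hc1 : (((1 : ℕ) : Fin 3)) = 1 := by decide
  have hc2 : (((2 : ℕ) : Fin 3)) = 2 := by decide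
  have hnodup' : l'.Nodup := by
    rw [hl']
    refine List.Nodup.map_on ?_ List.nodup_range
    intro j hj j' hj' hgg
    simp only [List.mem_range] at hj hj'
    have h1 := congrArg Prod.fst hgg
    have h2 := congrArg (fun x : V × Fin 3 => (x.2 : ℕ)) hgg
    simp only at h1 h2
    rw [List.getD_eq_getElem _ _ (by omega), List.getD_eq_getElem _ _ (by omega)] at h1
    have h3 := hnodup.getElem_inj_iff.1 h1
    simp only [Fin.val_natCast] at h2
    omega
  have hcov' : ∀ x : V × Fin 3, x ∈ l' := by
    rintro ⟨v, i⟩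
    obtain ⟨k, hk, hkv⟩ := List.mem_iff_getElem.1 (hcov v)
    have hiv := i.isLt
    rw [hl', List.mem_map]
    refine ⟨3 * k + i.val, List.mem_range.2 (by omega), ?_⟩
    have e1 : (3 * k + i.val) / 3 = k := by omega
    have e2 : (3 * k + i.val) % 3 = i.val := by omega
    simp only [e1, e2]
    rw [List.getD_eq_getElem _ _ (by omega), hkv, Fin.cast_val_eq_self]
  have hpairs : ∀ q : (V × Fin 3) × (V × Fin 3), q ∈ l'.zip (l'.rotate 1) ↔
      ((∃ v, v ∈ l ∧ (q = ((v, 0), (v, 1)) ∨ q = ((v, 1), (v, 2)))) ∨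
       (∃ p, p ∈ C ∧ q = ((p.1, 2), (p.2, 0)))) := by
    intro q
    rw [mem_zip_rotate]
    constructor
    · rintro ⟨j, hj, rfl⟩
      have hj3 : j < 3 * n := by rwa [hlen'] at hj
      have hr : j % 3 = 0 ∨ j % 3 = 1 ∨ j % 3 = 2 := by omega
      rcases hr with hr | hr | hr
      · left
        refine ⟨l[j / 3]'(by omega), List.getElem_mem _, Or.inl ?_⟩
        have hj1 : (j + 1) % l'.length = j + 1 := by
          rw [hlen']; exact Nat.mod_eq_of_lt (by omega)
        have e1 : (j + 1) / 3 = j / 3 := by omega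
        have e2 : (j + 1) % 3 = 1 := by omega
        simp only [hj1]
        rw [hget j hj, hget (j + 1) (by rw [hlen']; omega)]
        simp only [e1, e2, hr, hc0, hc1]
      · left
        refine ⟨l[j / 3]'(by omega), List.getElem_mem _, Or.inr ?_⟩
        have hj1 : (j + 1) % l'.length = j + 1 := by
          rw [hlen']; exact Nat.mod_eq_of_lt (by omega)
        have e1 : (j + 1) / 3 = j / 3 := by omega
        have e2 : (j + 1) % 3 = 2 := by omega
        simp only [hj1]
        rw [hget j hj, hget (j + 1) (by rw [hlen']; omega)]
        simp only [e1, e2, hr, hc1, hc2]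
      · right
        have hj1 : (j + 1) % l'.length = 3 * ((j / 3 + 1) % n) := by
          rw [hlen']
          rcases Nat.lt_or_ge (j + 1) (3 * n) with hc | hc
          · rw [Nat.mod_eq_of_lt hc, Nat.mod_eq_of_lt (by omega : j / 3 + 1 < n)]
            omega
          · have hj1' : j + 1 = 3 * n := by omega
            have hj2' : j / 3 + 1 = n := by omega
            rw [hj1', hj2', Nat.mod_self, Nat.mod_self, Nat.mul_zero]
        refine ⟨(l[j / 3]'(by omega), l[(j / 3 + 1) % n]'(Nat.mod_lt _ (by omega))),
          ?_, ?_⟩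
        · rw [hCeq]
          exact mem_zip_rotate.2 ⟨j / 3, by omega, rfl⟩
        · have hb : 3 * ((j / 3 + 1) % n) < l'.length := by
            rw [hlen']
            have := Nat.mod_lt (j / 3 + 1) (show 0 < n by omega)
            omega
          have e1 : 3 * ((j / 3 + 1) % n) / 3 = (j / 3 + 1) % n := by omega
          have e2 : 3 * ((j / 3 + 1) % n) % 3 = 0 := by omega
          simp only [hj1]
          rw [hget j hj, hget _ hb]
          simp only [e1, e2, hr, hc0, hc2]
    · rintro (⟨v, hv, hq | hq⟩ | ⟨p, hp, hq⟩)
      · obtain ⟨k, hk, rfl⟩ := List.mem_iff_getElem.1 hv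
        refine ⟨3 * k, by rw [hlen']; omega, ?_⟩
        have hj1 : (3 * k + 1) % l'.length = 3 * k + 1 := by
          rw [hlen']; exact Nat.mod_eq_of_lt (by omega)
        have e1 : 3 * k / 3 = k := by omega
        have e2 : 3 * k % 3 = 0 := by omega
        have e3 : (3 * k + 1) / 3 = k := by omega
        have e4 : (3 * k + 1) % 3 = 1 := by omega
        simp only [hj1]
        rw [hget (3 * k) (by rw [hlen']; omega), hget (3 * k + 1) (by rw [hlen']; omega)]
        simp only [e1, e2, e3, e4, hc0, hc1]
        exact hq
      · obtain ⟨k, hk, rfl⟩ := List.mem_iff_getElem.1 hv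
        refine ⟨3 * k + 1, by rw [hlen']; omega, ?_⟩
        have hj1 : (3 * k + 1 + 1) % l'.length = 3 * k + 2 := by
          rw [hlen']; exact Nat.mod_eq_of_lt (by omega)
        have e1 : (3 * k + 1) / 3 = k := by omega
        have e2 : (3 * k + 1) % 3 = 1 := by omega
        have e3 : (3 * k + 2) / 3 = k := by omega
        have e4 : (3 * k + 2) % 3 = 2 := by omega
        simp only [hj1]
        rw [hget (3 * k + 1) (by rw [hlen']; omega), hget (3 * k + 2) (by rw [hlen']; omega)]
        simp only [e1, e2, e3, e4, hc1, hc2]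
        exact hq
      · rw [hCeq] at hp
        obtain ⟨k, hk, rfl⟩ := mem_zip_rotate.1 hp
        refine ⟨3 * k + 2, by rw [hlen']; omega, ?_⟩
        have hj1 : (3 * k + 2 + 1) % l'.length = 3 * ((k + 1) % n) := by
          rw [hlen']
          rcases Nat.lt_or_ge (3 * k + 3) (3 * n) with hc | hc
          · rw [Nat.mod_eq_of_lt hc, Nat.mod_eq_of_lt (by omega : k + 1 < n)]
            omega
          · have ha : 3 * k + 2 + 1 = 3 * n := by omega
            have hb : k + 1 = n := by omega
            rw [ha, hb, Nat.mod_self, Nat.mod_self, Nat.mul_zero]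
        have hbnd : 3 * ((k + 1) % n) < l'.length := by
          rw [hlen']
          have := Nat.mod_lt (k + 1) (show 0 < n by omega)
          omega
        have e1 : (3 * k + 2) / 3 = k := by omega
        have e2 : (3 * k + 2) % 3 = 2 := by omega
        have e3 : 3 * ((k + 1) % n) / 3 = (k + 1) % n := by omega
        have e4 : 3 * ((k + 1) % n) % 3 = 0 := by omega
        simp only [hj1]
        rw [hget (3 * k + 2) (by rw [hlen']; omega), hget _ hbnd]
        simp only [e1, e2, e3, e4, hc0, hc2]
        exact hq
  refine ⟨{e | e ∈ (l'.zip (l'.rotate 1)).map fun p => s(p.1, p.2)}, ⟨l', ?_, hnodup', hcov', ?_, rfl⟩, ?_⟩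
  · intro hl0
    simpa [hl0] using hcov' (l.head hnil, 0)
  · intro e he
    simp only [Set.mem_setOf_eq, List.mem_map] at he
    obtain ⟨q, hq, rfl⟩ := he
    rcases (hpairs q).1 hq with ⟨v, hv, rfl | rfl⟩ | ⟨p, hp, rfl⟩
    · exact Or.inl ⟨v, Or.inl rfl⟩
    · exact Or.inl ⟨v, Or.inr rfl⟩
    · exact Or.inr ⟨p.1, p.2, hCA hp, rfl⟩
  · ext ⟨u, w⟩
    simp only [Set.mem_setOf_eq, List.mem_map]
    constructor
    · rintro ⟨hA', q, hq, heq⟩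
      rcases (hpairs q).1 hq with ⟨v, hv, rfl | rfl⟩ | ⟨p, hp, rfl⟩
      · simp only [Sym2.eq_iff, Prod.mk.injEq] at heq
        rcases heq with ⟨⟨-, h2⟩, -, h4⟩ | ⟨⟨-, h2⟩, -, h4⟩ <;>
          first
            | exact absurd h2 (by decide)
            | exact absurd h4 (by decide)
      · simp only [Sym2.eq_iff, Prod.mk.injEq] at heq
        rcases heq with ⟨⟨-, h2⟩, -, h4⟩ | ⟨⟨-, h2⟩, -, h4⟩ <;>
          first
            | exact absurd h2 (by decide)
            | exact absurd h4 (by decide)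
      · simp only [Sym2.eq_iff, Prod.mk.injEq] at heq
        rcases heq with ⟨⟨h1, -⟩, h3, -⟩ | ⟨⟨-, h2⟩, -⟩
        · have : p = (u, w) := Prod.ext h1 h3
          rwa [this] at hp
        · exact absurd h2 (by decide)
    · intro hC'
      refine ⟨hCA hC', ((u, 2), (w, 0)), (hpairs _).2 (Or.inr ⟨(u, w), hC', rfl⟩), rfl⟩

end Aux

/-- for a loopless digraph `G = (V, A)` with `|V| ≥ 2`:
(i) every Hamiltonian cycle of `G'` contains all spine edges; (ii) the map
`C' ↦ {(u,w) ∈ A : {(u,out),(w,in)} ∈ C'}` is a bijection from the Hamiltonian cycles of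
`G'` onto the Hamiltonian cycles of `G`; in particular (iii) `G'` has a Hamiltonian cycle
iff `G` does. -/
theorem stmt_13 {V : Type*} [Fintype V] (hV : 2 ≤ Fintype.card V)
    (A : Set (V × V)) (hloop : ∀ v : V, (v, v) ∉ A) :
    (∀ C', IsUHamCycle (tEdges A) C' →
      ∀ v : V, s((v, (0 : Fin 3)), (v, 1)) ∈ C' ∧ s((v, (1 : Fin 3)), (v, 2)) ∈ C') ∧
    Set.BijOn
      (fun C' : Set (Sym2 (V × Fin 3)) =>
        {p : V × V | p ∈ A ∧ s((p.1, (2 : Fin 3)), (p.2, 0)) ∈ C'})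
      {C' | IsUHamCycle (tEdges A) C'} {C | IsDHamCycle A C} ∧
    ((∃ C', IsUHamCycle (tEdges A) C') ↔ ∃ C, IsDHamCycle A C) := by
  classical
  have hnonempty : Nonempty V := Fintype.card_pos_iff.1 (by omega)
  have hmaps : ∀ C', IsUHamCycle (tEdges A) C' →
      IsDHamCycle A {p : V × V | p ∈ A ∧ s((p.1, (2 : Fin 3)), (p.2, 0)) ∈ C'} := by
    intro C' hC'
    obtain ⟨τ, hAτ, htrτ, hfmla, hgraph⟩ := main hV hC'
    rw [hgraph]
    exact perm_to_dham τ hAτ hloop htrτ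
  refine ⟨?_, ⟨?_, ?_, ?_⟩, ?_, ?_⟩
  · -- (i) spine edges
    intro C' hC' v
    obtain ⟨τ, hAτ, htrτ, hfmla, hgraph⟩ := main hV hC'
    rw [hfmla]
    exact ⟨Or.inl ⟨v, Or.inl rfl⟩, Or.inl ⟨v, Or.inr rfl⟩⟩
  · -- MapsTo
    intro C' hC'
    exact hmaps C' hC'
  · -- InjOn
    intro C1 h1 C2 h2 heq
    obtain ⟨τ1, hA1, htr1, hfmla1, hgraph1⟩ := main hV h1
    obtain ⟨τ2, hA2, htr2, hfmla2, hgraph2⟩ := main hV h2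
    simp only at heq
    have hτeq : ∀ v, τ1 v = τ2 v := by
      intro v
      have m1 : ((v, τ1 v) : V × V) ∈ {p : V × V | p.2 = τ1 p.1} := rfl
      rw [← hgraph1, heq, hgraph2] at m1
      exact m1
    rw [hfmla1, hfmla2]
    ext e
    simp only [Set.mem_setOf_eq]
    constructor <;> rintro (h | ⟨v, rfl⟩)
    · exact Or.inl h
    · exact Or.inr ⟨v, by rw [hτeq]⟩
    · exact Or.inl h
    · exact Or.inr ⟨v, by rw [← hτeq]⟩
  · -- SurjOn
    intro C hC
    obtain ⟨C', hC', himg⟩ := sur hC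
    exact ⟨C', hC', himg⟩
  · -- iff, forward
    rintro ⟨C', hC'⟩
    exact ⟨_, hmaps C' hC'⟩
  · -- iff, backward
    rintro ⟨C, hC⟩
    obtain ⟨C', hC', -⟩ := sur hC
    exact ⟨C', hC'⟩
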